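/- arXiv:1503.05381 — 2 statements merged into one kernel-verified Lean document; each statement's English description precedes it below -/
import Mathlib

section
/- Let μ be a probability measure on ℝ with everywhere positive density p_μ and cdf F_μ, and let s be the reflection map of the quantile trimmed regions. Then s(x) = F_μ^{−1}(1 − F_μ(x)) for all x, s is locally absolutely continuous on ℝ, and s′(x) = −p_μ(x)/p_μ(s(x)) for Lebesgue-almost every x. -/
open MeasureTheory Set Real Filter

noncomputable section

/-- The cumulative distribution function `F_μ(x) = μ((−∞,x])`. -/
def cdfR (μ : Measure ℝ) (x : ℝ) : ℝ := (μ (Iic x)).toReal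

/-- The quantile function `q_v = F_μ^{−1}(v)`. -/
def quantile (μ : Measure ℝ) (v : ℝ) : ℝ := sInf {x | v ≤ cdfR μ x}

/-- The quantile trimmed regions: `D_t = [q_{1/2−t/2}, q_{1/2+t/2}]` for `t ∈ [0,1)`
and `D_1 = ℝ`. -/
def DQ (μ : Measure ℝ) (t : ℝ) : Set ℝ :=
  if t < 1 then Icc (quantile μ (1/2 - t/2)) (quantile μ (1/2 + t/2)) else univ

/-- `τ(x) = inf {t ∈ [0,1] : x ∈ D_t}` for the quantile trimmed regions. -/
def tauQ (μ : Measure ℝ) (x : ℝ) : ℝ := sInf {t | t ∈ Icc (0:ℝ) 1 ∧ x ∈ DQ μ t}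

/-- The reflection map of the quantile trimmed regions: for `x ≠ m` (the median),
`s(x)` is the endpoint of `D_{τ(x)}` other than `x`, and `s(m) = m`. -/
def reflQ (μ : Measure ℝ) (x : ℝ) : ℝ :=
  if x < quantile μ (1/2) then quantile μ (1/2 + tauQ μ x / 2)
  else if quantile μ (1/2) < x then quantile μ (1/2 - tauQ μ x / 2)
  else quantile μ (1/2)

/-- The symmetric σ-algebra `F̂`: Borel sets `A` such that `x ∈ A ↔ s(x) ∈ A`. -/
def symmMS (s : ℝ → ℝ) : MeasurableSpace ℝ where
  MeasurableSet' A := MeasurableSet A ∧ ∀ x, x ∈ A ↔ s x ∈ A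
  measurableSet_empty := ⟨MeasurableSet.empty, fun _ => Iff.rfl⟩
  measurableSet_compl := by
    rintro A ⟨hA, h⟩
    exact ⟨hA.compl, fun x => by simp only [Set.mem_compl_iff]; exact not_congr (h x)⟩
  measurableSet_iUnion := by
    intro g hg
    refine ⟨MeasurableSet.iUnion fun i => (hg i).1, fun x => ?_⟩
    simp only [Set.mem_iUnion]
    exact exists_congr fun i => (hg i).2 x

namespace ReflAux

open Topology ENNReal

set_option linter.unusedSectionVars false

variable {μ : Measure ℝ} {pμ : ℝ → ℝ}
variable {μ : Measure ℝ} {pμ : ℝ → ℝ}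

lemma pμ_int [IsProbabilityMeasure μ] (hpos : ∀ x, 0 < pμ x) (hmeas : Measurable pμ)
    (hμ : μ = volume.withDensity fun x => ENNReal.ofReal (pμ x)) :
    Integrable pμ volume := by
  refine ⟨hmeas.aestronglyMeasurable, ?_⟩
  rw [hasFiniteIntegral_iff_ofReal (Eventually.of_forall fun x => (hpos x).le)]
  have : ∫⁻ x, ENNReal.ofReal (pμ x) ∂volume = μ univ := by
    rw [hμ, withDensity_apply _ MeasurableSet.univ, Measure.restrict_univ]
  rw [this, measure_univ]; exact ENNReal.one_lt_top

lemma Iic_eq [IsProbabilityMeasure μ] (x : ℝ) : μ (Iic x) = ENNReal.ofReal (cdfR μ x) := by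
  rw [cdfR, ENNReal.ofReal_toReal (measure_ne_top μ _)]

lemma cdfR_sub [IsProbabilityMeasure μ] (hpos : ∀ x, 0 < pμ x) (hmeas : Measurable pμ)
    (hμ : μ = volume.withDensity fun x => ENNReal.ofReal (pμ x))
    {u v : ℝ} (huv : u ≤ v) :
    cdfR μ v - cdfR μ u = ∫ t in u..v, pμ t := by
  have hdisj : Disjoint (Iic u) (Ioc u v) := by
    simp [Set.disjoint_left]; intro a ha h'a; linarith
  have hunion : Iic u ∪ Ioc u v = Iic v := Iic_union_Ioc_eq_Iic huv
  have hadd : μ (Iic v) = μ (Iic u) + μ (Ioc u v) := by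
    rw [← hunion, measure_union hdisj measurableSet_Ioc]
  have hIoc : μ (Ioc u v) = ENNReal.ofReal (∫ t in u..v, pμ t) := by
    rw [intervalIntegral.integral_of_le huv, hμ, withDensity_apply _ measurableSet_Ioc,
      integral_eq_lintegral_of_nonneg_ae (Eventually.of_forall fun x => (hpos x).le)
        hmeas.aestronglyMeasurable,
      ENNReal.ofReal_toReal]
    exact ((setLIntegral_le_lintegral _ _).trans_lt (by
      have : ∫⁻ x, ENNReal.ofReal (pμ x) ∂volume = μ univ := by
        rw [hμ, withDensity_apply _ MeasurableSet.univ, Measure.restrict_univ]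
      rw [this, measure_univ]; exact ENNReal.one_lt_top)).ne
  have h1 : cdfR μ v = cdfR μ u + (∫ t in u..v, pμ t) := by
    have := congrArg ENNReal.toReal hadd
    rw [ENNReal.toReal_add (measure_ne_top μ _) (measure_ne_top μ _)] at this
    rw [cdfR, this, cdfR, hIoc, ENNReal.toReal_ofReal]
    exact intervalIntegral.integral_nonneg huv fun x _ => (hpos x).le
  linarith

lemma cdfR_strictMono [IsProbabilityMeasure μ] (hpos : ∀ x, 0 < pμ x) (hmeas : Measurable pμ)
    (hμ : μ = volume.withDensity fun x => ENNReal.ofReal (pμ x)) :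
    StrictMono (cdfR μ) := by
  intro u v huv
  have h := cdfR_sub hpos hmeas hμ huv.le
  have hpos' : 0 < ∫ t in u..v, pμ t :=
    intervalIntegral.intervalIntegral_pos_of_pos_on
      ((pμ_int hpos hmeas hμ).intervalIntegrable) (fun x _ => hpos x) huv
  linarith

lemma cdfR_continuous [IsProbabilityMeasure μ] (hpos : ∀ x, 0 < pμ x) (hmeas : Measurable pμ)
    (hμ : μ = volume.withDensity fun x => ENNReal.ofReal (pμ x)) :
    Continuous (cdfR μ) := by
  have : cdfR μ = fun x => cdfR μ 0 + ∫ t in (0:ℝ)..x, pμ t := by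
    funext x
    rcases le_total (0:ℝ) x with h | h
    · have := cdfR_sub hpos hmeas hμ h; linarith
    · have := cdfR_sub hpos hmeas hμ h
      rw [intervalIntegral.integral_symm] at this; linarith
  rw [this]
  exact continuous_const.add (intervalIntegral.continuous_primitive
    (fun a b => (pμ_int hpos hmeas hμ).intervalIntegrable) 0)

lemma cdfR_mem_Ioo [IsProbabilityMeasure μ] (hpos : ∀ x, 0 < pμ x) (hmeas : Measurable pμ)
    (hμ : μ = volume.withDensity fun x => ENNReal.ofReal (pμ x)) (x : ℝ) :
    cdfR μ x ∈ Ioo (0:ℝ) 1 := by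
  have hm := cdfR_strictMono hpos hmeas hμ
  have h1 : (0:ℝ) ≤ cdfR μ (x - 1) := ENNReal.toReal_nonneg
  have h2 : cdfR μ (x + 1) ≤ 1 := by
    rw [cdfR]
    refine ENNReal.toReal_le_of_le_ofReal zero_le_one ?_
    simpa using prob_le_one
  exact ⟨h1.trans_lt (hm (by linarith)), (hm (by linarith : x < x + 1)).trans_le h2⟩


lemma exists_cdfR_eq [IsProbabilityMeasure μ] (hm : StrictMono (cdfR μ))
    (hcont : Continuous (cdfR μ)) {v : ℝ} (hv : v ∈ Ioo (0:ℝ) 1) :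
    ∃ x, cdfR μ x = v := by
  have hcdf : cdfR μ = ProbabilityTheory.cdf μ := by
    funext x; exact (ProbabilityTheory.cdf_eq_real μ x).symm
  have h1 : Tendsto (cdfR μ) atTop (𝓝 1) := by
    rw [hcdf]; exact ProbabilityTheory.tendsto_cdf_atTop μ
  have h0 : Tendsto (cdfR μ) atBot (𝓝 0) := by
    rw [hcdf]; exact ProbabilityTheory.tendsto_cdf_atBot μ
  obtain ⟨b, hb⟩ := (h1.eventually (eventually_gt_nhds hv.2)).exists
  obtain ⟨a, ha⟩ := (h0.eventually (eventually_lt_nhds hv.1)).exists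
  have hab : a ≤ b := (hm.lt_iff_lt.mp (ha.trans hb)).le
  obtain ⟨x, _, hx⟩ := intermediate_value_Icc hab hcont.continuousOn ⟨ha.le, hb.le⟩
  exact ⟨x, hx⟩

lemma quantile_cdfR (hm : StrictMono (cdfR μ)) (x : ℝ) : quantile μ (cdfR μ x) = x := by
  have : {y | cdfR μ x ≤ cdfR μ y} = Ici x := by
    ext y; simpa using hm.le_iff_le
  rw [quantile, this, csInf_Ici]

lemma cdfR_quantile [IsProbabilityMeasure μ] (hm : StrictMono (cdfR μ))
    (hcont : Continuous (cdfR μ)) {v : ℝ} (hv : v ∈ Ioo (0:ℝ) 1) :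
    cdfR μ (quantile μ v) = v := by
  obtain ⟨x, hx⟩ := exists_cdfR_eq hm hcont hv
  rw [← hx, quantile_cdfR hm, hx]

lemma quantile_le_iff [IsProbabilityMeasure μ] (hm : StrictMono (cdfR μ))
    (hcont : Continuous (cdfR μ)) {v x : ℝ} (hv : v ∈ Ioo (0:ℝ) 1) :
    quantile μ v ≤ x ↔ v ≤ cdfR μ x := by
  obtain ⟨y, hy⟩ := exists_cdfR_eq hm hcont hv
  rw [← hy, quantile_cdfR hm, hm.le_iff_le]

lemma le_quantile_iff [IsProbabilityMeasure μ] (hm : StrictMono (cdfR μ))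
    (hcont : Continuous (cdfR μ)) {v x : ℝ} (hv : v ∈ Ioo (0:ℝ) 1) :
    x ≤ quantile μ v ↔ cdfR μ x ≤ v := by
  obtain ⟨y, hy⟩ := exists_cdfR_eq hm hcont hv
  rw [← hy, quantile_cdfR hm, hm.le_iff_le]



lemma tauQ_eq [IsProbabilityMeasure μ] (hm : StrictMono (cdfR μ))
    (hcont : Continuous (cdfR μ)) (hx : ∀ y, cdfR μ y ∈ Ioo (0:ℝ) 1) (x : ℝ) :
    tauQ μ x = |2 * cdfR μ x - 1| := by
  set c := |2 * cdfR μ x - 1| with hc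
  have hF := hx x
  have hc0 : 0 ≤ c := abs_nonneg _
  have hc1 : c < 1 := abs_lt.mpr ⟨by linarith [hF.1], by linarith [hF.2]⟩
  have hchar : ∀ t, 0 ≤ t → t < 1 → (x ∈ DQ μ t ↔ c ≤ t) := by
    intro t ht0 ht1
    have hv1 : (1/2 - t/2 : ℝ) ∈ Ioo (0:ℝ) 1 := ⟨by linarith, by linarith⟩
    have hv2 : (1/2 + t/2 : ℝ) ∈ Ioo (0:ℝ) 1 := ⟨by linarith, by linarith⟩
    rw [DQ, if_pos ht1, mem_Icc, quantile_le_iff hm hcont hv1,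
      le_quantile_iff hm hcont hv2, hc, abs_le]
    constructor <;> intro h <;> constructor <;> linarith [h.1, h.2]
  have hset : {t | t ∈ Icc (0:ℝ) 1 ∧ x ∈ DQ μ t} = Icc c 1 := by
    ext t
    simp only [mem_setOf_eq, mem_Icc]
    constructor
    · rintro ⟨⟨ht0, ht1⟩, hmem⟩
      refine ⟨?_, ht1⟩
      rcases lt_or_eq_of_le ht1 with h | h
      · exact (hchar t ht0 h).mp hmem
      · rw [h]; exact hc1.le
    · rintro ⟨hct, ht1⟩
      refine ⟨⟨hc0.trans hct, ht1⟩, ?_⟩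
      rcases lt_or_eq_of_le ht1 with h | h
      · exact (hchar t (hc0.trans hct) h).mpr hct
      · rw [DQ, h, if_neg (lt_irrefl _)]; trivial
  rw [tauQ, hset, csInf_Icc (hc1.le.trans le_rfl)]

lemma reflQ_eq [IsProbabilityMeasure μ] (hm : StrictMono (cdfR μ))
    (hcont : Continuous (cdfR μ)) (hx : ∀ y, cdfR μ y ∈ Ioo (0:ℝ) 1) (x : ℝ) :
    reflQ μ x = quantile μ (1 - cdfR μ x) := by
  have hF := hx x
  have hm12 : cdfR μ (quantile μ (1/2)) = 1/2 :=
    cdfR_quantile hm hcont (by norm_num : (1/2:ℝ) ∈ Ioo (0:ℝ) 1)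
  have htau := tauQ_eq hm hcont hx x
  rw [reflQ]
  rcases lt_trichotomy x (quantile μ (1/2)) with h | h | h
  · rw [if_pos h, htau]
    have hFx : cdfR μ x < 1/2 := by
      have := hm h; rw [hm12] at this; exact this
    congr 1
    rw [abs_of_neg (by linarith)]; ring
  · rw [if_neg (by rw [h]; exact lt_irrefl _), if_neg (by rw [h]; exact lt_irrefl _)]
    congr 1
    rw [h, hm12]; norm_num
  · rw [if_neg (not_lt.mpr h.le), if_pos h, htau]
    have hFx : 1/2 < cdfR μ x := by
      have := hm h; rw [hm12] at this; exact this
    congr 1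
    rw [abs_of_pos (by linarith)]; ring

variable {μ : Measure ℝ} {s : ℝ → ℝ}


section basic
variable [IsProbabilityMeasure μ] {s : ℝ → ℝ}
variable (hm : StrictMono (cdfR μ)) (hcont : Continuous (cdfR μ))
    (hx : ∀ y, cdfR μ y ∈ Ioo (0:ℝ) 1)
    (hs : ∀ x, s x = quantile μ (1 - cdfR μ x))
include hm hcont hx hs

lemma cdfR_s (x : ℝ) : cdfR μ (s x) = 1 - cdfR μ x := by
  rw [hs]
  exact cdfR_quantile hm hcont ⟨by linarith [(hx x).2], by linarith [(hx x).1]⟩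

lemma s_invol (x : ℝ) : s (s x) = x := by
  rw [hs (s x), cdfR_s hm hcont hx hs, show (1 - (1 - cdfR μ x)) = cdfR μ x by ring,
    quantile_cdfR hm]

lemma s_strictAnti : StrictAnti s := by
  intro a b hab
  have h1 : cdfR μ (s b) < cdfR μ (s a) := by
    rw [cdfR_s hm hcont hx hs, cdfR_s hm hcont hx hs]
    have := hm hab; linarith
  exact hm.lt_iff_lt.mp h1

lemma s_le_iff (a x : ℝ) : s x ≤ a ↔ s a ≤ x := by
  have ha := s_strictAnti hm hcont hx hs
  rw [show (s x ≤ a) ↔ (s x ≤ s (s a)) by rw [s_invol hm hcont hx hs], ha.le_iff_ge]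

lemma lt_s_iff (a x : ℝ) : x < s a ↔ a < s x := by
  have ha := s_strictAnti hm hcont hx hs
  rw [show (x < s a) ↔ (s (s x) < s a) by rw [s_invol hm hcont hx hs], ha.lt_iff_gt]

lemma s_surj : Function.Surjective s := fun y => ⟨s y, s_invol hm hcont hx hs y⟩

lemma s_continuous : Continuous s := by
  have hmono : StrictMono (fun x => -(s x)) := fun a b hab =>
    neg_lt_neg (s_strictAnti hm hcont hx hs hab)
  have hsurj : Function.Surjective (fun x => -(s x)) := fun y => by
    refine ⟨s (-y), ?_⟩
    simp [s_invol hm hcont hx hs]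
  have this : Continuous fun x => -(s x) := by
    have h := (StrictMono.orderIsoOfSurjective _ hmono hsurj).toHomeomorph.continuous
    rwa [OrderIso.coe_toHomeomorph, StrictMono.coe_orderIsoOfSurjective] at h
  have h2 : s = fun x => -(-(s x)) := by funext x; ring
  rw [h2]
  exact this.neg

lemma s_measurable : Measurable s := (s_continuous hm hcont hx hs).measurable

lemma map_s_eq (hμac : ∀ y : ℝ, μ {y} = 0) : Measure.map s μ = μ := by
  have hmeas := s_measurable hm hcont hx hs
  haveI : IsProbabilityMeasure (Measure.map s μ) :=
    Measure.isProbabilityMeasure_map hmeas.aemeasurable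
  refine Measure.ext_of_Iic _ _ (fun a => ?_)
  rw [Measure.map_apply hmeas measurableSet_Iic]
  have hpre : s ⁻¹' Iic a = Ici (s a) := by
    ext x; simp [s_le_iff hm hcont hx hs a x]
  rw [hpre]
  have hIio : ∀ y : ℝ, μ (Iio y) = μ (Iic y) := by
    intro y
    refine le_antisymm (measure_mono Iio_subset_Iic_self) ?_
    have : Iic y ⊆ Iio y ∪ {y} := by
      intro z hz; rcases lt_or_eq_of_le (mem_Iic.mp hz) with h | h
      · exact Or.inl h
      · exact Or.inr (by simp [h])
    calc μ (Iic y) ≤ μ (Iio y ∪ {y}) := measure_mono this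
      _ ≤ μ (Iio y) + μ {y} := measure_union_le _ _
      _ = μ (Iio y) := by rw [hμac y, add_zero]
  have hIic : ∀ y : ℝ, μ (Iic y) = ENNReal.ofReal (cdfR μ y) := by
    intro y; rw [cdfR, ENNReal.ofReal_toReal (measure_ne_top μ _)]
  have hcompl : μ (Ici (s a)) = 1 - μ (Iio (s a)) := by
    rw [← compl_Iio, measure_compl measurableSet_Iio (measure_ne_top μ _), measure_univ]
  rw [hcompl, hIio, hIic, cdfR_s hm hcont hx hs, hIic]
  have h0 : (0:ℝ) ≤ cdfR μ a := ENNReal.toReal_nonneg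
  have h1 : cdfR μ a ≤ 1 := by linarith [(le_of_lt ((hx a).2))]
  rw [← ENNReal.ofReal_one, ← ENNReal.ofReal_sub _ (by linarith : (0:ℝ) ≤ 1 - cdfR μ a)]
  norm_num

end basic
variable {s : ℝ → ℝ}

lemma s_le_iff' (hinv : ∀ x, s (s x) = x) (hanti : StrictAnti s) (a x : ℝ) :
    s x ≤ a ↔ s a ≤ x := by
  rw [show (s x ≤ a) ↔ (s x ≤ s (s a)) by rw [hinv], hanti.le_iff_ge]

lemma lt_s_iff' (hinv : ∀ x, s (s x) = x) (hanti : StrictAnti s) (a x : ℝ) :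
    x < s a ↔ a < s x := by
  rw [show (x < s a) ↔ (s (s x) < s a) by rw [hinv], hanti.lt_iff_gt]

section main2
variable [IsProbabilityMeasure μ]
variable (hpos : ∀ x, 0 < pμ x) (hmeas : Measurable pμ)
    (hμ : μ = volume.withDensity fun x => ENNReal.ofReal (pμ x))
    (hsmeas : Measurable s)
    (hmap : Measure.map s μ = μ)
    (hinv : ∀ x, s (s x) = x)
    (hanti : StrictAnti s)
include hpos hmeas hμ hsmeas hmap hinv hanti

lemma key (u v : ℝ) :
    ∫⁻ x in Ioc u v, ENNReal.ofReal (pμ x) * (ENNReal.ofReal (pμ (s x)))⁻¹ ∂volume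
      = ENNReal.ofReal (s u - s v) := by
  set φ : ℝ → ℝ≥0∞ := fun x => (ENNReal.ofReal (pμ (s x)))⁻¹ with hφdef
  have hφ : Measurable φ := ((hmeas.comp hsmeas).ennreal_ofReal).inv
  have step1 : ∫⁻ x in Ioc u v, ENNReal.ofReal (pμ x) * φ x ∂volume
      = ∫⁻ x in Ioc u v, φ x ∂μ := by
    rw [hμ, setLIntegral_withDensity_eq_setLIntegral_mul volume hmeas.ennreal_ofReal hφ
      measurableSet_Ioc]
    rfl
  have step2 : ∫⁻ x in Ioc u v, φ x ∂μ = ∫⁻ x, (Ioc u v).indicator φ x ∂μ :=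
    (lintegral_indicator measurableSet_Ioc φ).symm
  have step3 : ∫⁻ x, (Ioc u v).indicator φ x ∂μ = ∫⁻ x, (Ioc u v).indicator φ (s x) ∂μ := by
    conv_lhs => rw [← hmap]
    rw [lintegral_map (hφ.indicator measurableSet_Ioc) hsmeas]
  have step4 : ∀ x, (Ioc u v).indicator φ (s x)
      = (Ico (s v) (s u)).indicator (fun y => (ENNReal.ofReal (pμ y))⁻¹) x := by
    intro x
    have hmem : s x ∈ Ioc u v ↔ x ∈ Ico (s v) (s u) := by
      simp only [mem_Ioc, mem_Ico]
      rw [s_le_iff' hinv hanti, ← lt_s_iff' hinv hanti, and_comm]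
    by_cases h : x ∈ Ico (s v) (s u)
    · rw [indicator_of_mem (hmem.mpr h), indicator_of_mem h, hφdef]
      simp only [hinv]
    · rw [indicator_of_notMem (fun hc => h (hmem.mp hc)), indicator_of_notMem h]
  have step5 : ∫⁻ x, (Ico (s v) (s u)).indicator (fun y => (ENNReal.ofReal (pμ y))⁻¹) x ∂μ
      = ENNReal.ofReal (s u - s v) := by
    rw [lintegral_indicator measurableSet_Ico, hμ,
      setLIntegral_withDensity_eq_setLIntegral_mul volume (g := fun y => (ENNReal.ofReal (pμ y))⁻¹) hmeas.ennreal_ofReal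
        (hmeas.ennreal_ofReal.inv) measurableSet_Ico]
    rw [setLIntegral_congr_fun measurableSet_Ico
      ((fun x _ => by
        show ENNReal.ofReal (pμ x) * (ENNReal.ofReal (pμ x))⁻¹ = (1:ℝ≥0∞)
        exact ENNReal.mul_inv_cancel (ENNReal.ofReal_pos.mpr (hpos x)).ne' ENNReal.ofReal_ne_top))]
    simp [Real.volume_Ico]
  calc ∫⁻ x in Ioc u v, ENNReal.ofReal (pμ x) * (ENNReal.ofReal (pμ (s x)))⁻¹ ∂volume
      = ∫⁻ x in Ioc u v, φ x ∂μ := step1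
    _ = ∫⁻ x, (Ioc u v).indicator φ x ∂μ := step2
    _ = ∫⁻ x, (Ioc u v).indicator φ (s x) ∂μ := step3
    _ = ∫⁻ x, (Ico (s v) (s u)).indicator (fun y => (ENNReal.ofReal (pμ y))⁻¹) x ∂μ := by
        exact lintegral_congr step4
    _ = ENNReal.ofReal (s u - s v) := step5

lemma integrableOn_h (u v : ℝ) :
    IntegrableOn (fun x => pμ x / pμ (s x)) (Ioc u v) volume := by
  refine ⟨(hmeas.div (hmeas.comp hsmeas)).aestronglyMeasurable, ?_⟩
  rw [hasFiniteIntegral_iff_ofReal (Eventually.of_forall fun x =>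
    div_nonneg (hpos x).le (hpos (s x)).le)]
  have hcongr : ∀ x, ENNReal.ofReal (pμ x / pμ (s x))
      = ENNReal.ofReal (pμ x) * (ENNReal.ofReal (pμ (s x)))⁻¹ := by
    intro x
    rw [ENNReal.ofReal_div_of_pos (hpos (s x)), div_eq_mul_inv]
  calc ∫⁻ x in Ioc u v, ENNReal.ofReal (pμ x / pμ (s x)) ∂volume
      = ∫⁻ x in Ioc u v, ENNReal.ofReal (pμ x) * (ENNReal.ofReal (pμ (s x)))⁻¹ ∂volume := by
        exact lintegral_congr fun x => hcongr x
    _ = ENNReal.ofReal (s u - s v) := key hpos hmeas hμ hsmeas hmap hinv hanti u v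
    _ < ⊤ := ENNReal.ofReal_lt_top

lemma integral_h {u v : ℝ} (huv : u ≤ v) :
    ∫ x in u..v, pμ x / pμ (s x) = s u - s v := by
  rw [intervalIntegral.integral_of_le huv,
    integral_eq_lintegral_of_nonneg_ae (Eventually.of_forall fun x =>
      div_nonneg (hpos x).le (hpos (s x)).le)
      (hmeas.div (hmeas.comp hsmeas)).aestronglyMeasurable]
  have hcongr : ∀ x, ENNReal.ofReal (pμ x / pμ (s x))
      = ENNReal.ofReal (pμ x) * (ENNReal.ofReal (pμ (s x)))⁻¹ := by
    intro x
    rw [ENNReal.ofReal_div_of_pos (hpos (s x)), div_eq_mul_inv]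
  rw [lintegral_congr fun x => hcongr x, key hpos hmeas hμ hsmeas hmap hinv hanti u v,
    ENNReal.toReal_ofReal (sub_nonneg.mpr (hanti.antitone huv))]

lemma intervalIntegrable_g (u v : ℝ) :
    IntervalIntegrable (fun x => -(pμ x) / pμ (s x)) volume u v := by
  have heq : (fun x => -(pμ x) / pμ (s x)) = fun x => -(pμ x / pμ (s x)) :=
    funext fun x => neg_div _ _
  rw [heq]
  exact ⟨(integrableOn_h hpos hmeas hμ hsmeas hmap hinv hanti u v).neg,
    (integrableOn_h hpos hmeas hμ hsmeas hmap hinv hanti v u).neg⟩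

lemma integral_g (u v : ℝ) :
    ∫ x in u..v, -(pμ x) / pμ (s x) = s v - s u := by
  have heq : (fun x => -(pμ x) / pμ (s x)) = fun x => -(pμ x / pμ (s x)) :=
    funext fun x => neg_div _ _
  have hcase : ∀ a b : ℝ, a ≤ b → ∫ x in a..b, -(pμ x) / pμ (s x) = s b - s a := by
    intro a b hab
    rw [heq, intervalIntegral.integral_neg, integral_h hpos hmeas hμ hsmeas hmap hinv hanti hab]
    ring
  rcases le_total u v with h | h
  · exact hcase u v h
  · rw [intervalIntegral.integral_symm, hcase v u h]; ring

lemma ae_deriv (hscont : Continuous s) :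
    ∀ᵐ x ∂volume, HasDerivAt s (-(pμ x) / pμ (s x)) x := by
  set f : ℝ → ℝ := fun x => -(s x) with hfdef
  have hf_mono : Monotone f := fun a b hab => neg_le_neg (hanti.antitone hab)
  have hfeq : ∀ x, hf_mono.stieltjesFunction x = f x := by
    intro x
    rw [hf_mono.stieltjesFunction_eq]
    exact rightLim_eq_of_tendsto
      (((hscont.neg).tendsto x).mono_left nhdsWithin_le_nhds)
  set d : ℝ → ℝ≥0∞ := fun x => ENNReal.ofReal (pμ x) * (ENNReal.ofReal (pμ (s x)))⁻¹ with hddef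
  have hd_meas : Measurable d := hmeas.ennreal_ofReal.mul ((hmeas.comp hsmeas).ennreal_ofReal).inv
  have hmeasure : hf_mono.stieltjesFunction.measure = volume.withDensity d := by
    refine Measure.ext_of_Ioc' _ _ (fun a b hab => ?_) (fun a b hab => ?_)
    · rw [StieltjesFunction.measure_Ioc]; exact ENNReal.ofReal_ne_top
    · rw [StieltjesFunction.measure_Ioc, hfeq, hfeq, withDensity_apply _ measurableSet_Ioc,
        hddef, key hpos hmeas hμ hsmeas hmap hinv hanti a b]
      congr 1
      simp only [hfdef]
      ring
  have hrn : hf_mono.stieltjesFunction.measure.rnDeriv volume =ᵐ[volume] d := by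
    rw [hmeasure]; exact Measure.rnDeriv_withDensity volume hd_meas
  filter_upwards [hf_mono.ae_hasDerivAt, hrn] with x hx hdx
  rw [hdx] at hx
  have hval : (d x).toReal = pμ x / pμ (s x) := by
    rw [hddef]
    simp only []
    rw [ENNReal.toReal_mul, ENNReal.toReal_inv, ENNReal.toReal_ofReal (hpos x).le,
      ENNReal.toReal_ofReal (hpos (s x)).le, div_eq_mul_inv]
  rw [hval] at hx
  have hneg := hx.neg
  rw [show (-f) = s from funext fun y => neg_neg _] at hneg
  have : -(pμ x) / pμ (s x) = -(pμ x / pμ (s x)) := neg_div _ _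
  rw [this]
  exact hneg

end main2

end ReflAux

/-- Identities (17) and (18): the reflection map of the quantile trimmed regions satisfies
`s(x) = F_μ^{−1}(1 − F_μ(x))` for all `x`; `s` is locally absolutely continuous on `ℝ`
(encoded by the fundamental theorem of calculus with locally integrable integrand), and
`s′(x) = −p_μ(x)/p_μ(s(x))` for (Lebesgue-)almost every `x`. -/
theorem reflQ_formula_and_derivative
    (μ : Measure ℝ) [IsProbabilityMeasure μ]
    (pμ : ℝ → ℝ) (hpμ_pos : ∀ x, 0 < pμ x) (hpμ_meas : Measurable pμ)
    (hμ : μ = volume.withDensity fun x => ENNReal.ofReal (pμ x)) :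
    (∀ x, reflQ μ x = quantile μ (1 - cdfR μ x))
    ∧ (∀ u v : ℝ, IntervalIntegrable (fun x => -(pμ x) / pμ (reflQ μ x)) volume u v)
    ∧ (∀ u v : ℝ, ∫ x in u..v, (-(pμ x) / pμ (reflQ μ x)) = reflQ μ v - reflQ μ u)
    ∧ (∀ᵐ x ∂volume, HasDerivAt (reflQ μ) (-(pμ x) / pμ (reflQ μ x)) x) := by
  classical
  have hm : StrictMono (cdfR μ) := ReflAux.cdfR_strictMono hpμ_pos hpμ_meas hμ
  have hcont : Continuous (cdfR μ) := ReflAux.cdfR_continuous hpμ_pos hpμ_meas hμ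
  have hx : ∀ y, cdfR μ y ∈ Ioo (0:ℝ) 1 := ReflAux.cdfR_mem_Ioo hpμ_pos hpμ_meas hμ
  have h1 : ∀ x, reflQ μ x = quantile μ (1 - cdfR μ x) := ReflAux.reflQ_eq hm hcont hx
  have hμac : ∀ y : ℝ, μ {y} = 0 := by
    intro y
    rw [hμ]
    exact (withDensity_absolutelyContinuous volume _) (Real.volume_singleton)
  have hinv : ∀ x, reflQ μ (reflQ μ x) = x := ReflAux.s_invol hm hcont hx h1
  have hanti : StrictAnti (reflQ μ) := ReflAux.s_strictAnti hm hcont hx h1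
  have hscont : Continuous (reflQ μ) := ReflAux.s_continuous hm hcont hx h1
  have hsmeas : Measurable (reflQ μ) := ReflAux.s_measurable hm hcont hx h1
  have hmap : Measure.map (reflQ μ) μ = μ := ReflAux.map_s_eq hm hcont hx h1 hμac
  refine ⟨h1, ?_, ?_, ?_⟩
  · exact fun u v => ReflAux.intervalIntegrable_g hpμ_pos hpμ_meas hμ hsmeas hmap hinv hanti u v
  · exact fun u v => ReflAux.integral_g hpμ_pos hpμ_meas hμ hsmeas hmap hinv hanti u v
  · exact ReflAux.ae_deriv hpμ_pos hpμ_meas hμ hsmeas hmap hinv hanti hscont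
end
end

section
/- Let μ be a probability measure on ℝ with everywhere positive density p_μ, let s be the reflection map of the quantile trimmed regions, and set W(x) = (F̂_μ(x)/p_μ(x))² log(1/(2F̂_μ(x))). Then for every locally absolutely continuous f: ℝ → ℝ, ∫_ℝ W(x) (f′(s(x)))² (s′(x))² μ(dx) = ∫_ℝ W(y) (f′(y))² μ(dy), where both sides may be +∞. -/
open MeasureTheory Set Real Filter

noncomputable section

/-- The weight `W = (F̂_μ/p_μ)² log(1/(2F̂_μ))`, with `F̂_μ = min(F_μ, 1 − F_μ)`. -/
def Wq (μ : Measure ℝ) (pμ : ℝ → ℝ) (x : ℝ) : ℝ :=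
  (min (cdfR μ x) (1 - cdfR μ x) / pμ x) ^ 2
    * Real.log (1 / (2 * min (cdfR μ x) (1 - cdfR μ x)))

section Aux

open scoped ENNReal

variable {μ : Measure ℝ} {pμ : ℝ → ℝ}

variable {μ : Measure ℝ} {pμ : ℝ → ℝ}

lemma meas_pos [IsProbabilityMeasure μ] (hpμ_pos : ∀ x, 0 < pμ x) (hpμ_meas : Measurable pμ)
    (hμ : μ = volume.withDensity fun x => ENNReal.ofReal (pμ x))
    {s : Set ℝ} (hs : MeasurableSet s) (hvs : volume s ≠ 0) : 0 < μ s := by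
  rw [hμ, withDensity_apply _ hs]
  rw [pos_iff_ne_zero]
  intro h
  rw [lintegral_eq_zero_iff (hpμ_meas.ennreal_ofReal)] at h
  have : ∀ᵐ x ∂(volume.restrict s), False := by
    filter_upwards [h] with x hx
    simp only [Pi.zero_apply, ENNReal.ofReal_eq_zero] at hx
    exact absurd hx (not_le.mpr (hpμ_pos x))
  rw [ae_iff] at this
  simp only [not_false_iff, setOf_true] at this
  rw [Measure.restrict_apply_univ] at this
  exact hvs this

lemma atomless (hμ : μ = volume.withDensity fun x => ENNReal.ofReal (pμ x)) (x : ℝ) :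
    μ {x} = 0 := by
  rw [hμ, withDensity_apply _ (measurableSet_singleton x), Measure.restrict_eq_zero.mpr
    (volume_singleton), lintegral_zero_measure]

lemma cdfR_pos [IsProbabilityMeasure μ] (hpμ_pos : ∀ x, 0 < pμ x) (hpμ_meas : Measurable pμ)
    (hμ : μ = volume.withDensity fun x => ENNReal.ofReal (pμ x)) (x : ℝ) : 0 < cdfR μ x := by
  refine ENNReal.toReal_pos ?_ (measure_ne_top _ _)
  exact (meas_pos hpμ_pos hpμ_meas hμ measurableSet_Iic (by simp)).ne'

lemma cdfR_lt_one [IsProbabilityMeasure μ] (hpμ_pos : ∀ x, 0 < pμ x) (hpμ_meas : Measurable pμ)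
    (hμ : μ = volume.withDensity fun x => ENNReal.ofReal (pμ x)) (x : ℝ) : cdfR μ x < 1 := by
  have h1 : μ (Iic x) + μ (Ioi x) = 1 := by
    rw [← measure_univ (μ := μ), ← Iic_union_Ioi (a := x)]
    exact (measure_union (Iic_disjoint_Ioi le_rfl) measurableSet_Ioi).symm
  have h2 : 0 < μ (Ioi x) := meas_pos hpμ_pos hpμ_meas hμ measurableSet_Ioi (by simp)
  have h3 : μ (Iic x) < 1 := by
    rw [← h1]
    exact ENNReal.lt_add_right (measure_ne_top _ _) h2.ne'
  unfold cdfR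
  rw [show (1:ℝ) = (1:ℝ≥0∞).toReal from ENNReal.toReal_one.symm]
  exact ENNReal.toReal_strict_mono ENNReal.one_ne_top h3

lemma cdfR_strictMono [IsProbabilityMeasure μ] (hpμ_pos : ∀ x, 0 < pμ x)
    (hpμ_meas : Measurable pμ)
    (hμ : μ = volume.withDensity fun x => ENNReal.ofReal (pμ x)) : StrictMono (cdfR μ) := by
  intro a b hab
  have h1 : μ (Iic b) = μ (Iic a) + μ (Ioc a b) := by
    rw [← Iic_union_Ioc_eq_Iic hab.le]
    exact measure_union (Iic_disjoint_Ioc le_rfl) measurableSet_Ioc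
  have h2 : 0 < μ (Ioc a b) := meas_pos hpμ_pos hpμ_meas hμ measurableSet_Ioc
    (by simp [Real.volume_Ioc]; linarith)
  have : μ (Iic a) < μ (Iic b) := by
    rw [h1]
    exact ENNReal.lt_add_right (measure_ne_top _ _) h2.ne'
  exact ENNReal.toReal_strict_mono (measure_ne_top _ _) this

lemma cdfR_eq_cdf [IsProbabilityMeasure μ] : cdfR μ = ⇑(ProbabilityTheory.cdf μ) :=
  funext fun x => (ProbabilityTheory.cdf_eq_real μ x).symm

lemma cdfR_continuous [IsProbabilityMeasure μ]
    (hμ : μ = volume.withDensity fun x => ENNReal.ofReal (pμ x)) : Continuous (cdfR μ) := by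
  rw [cdfR_eq_cdf]
  rw [continuous_iff_continuousAt]
  intro x
  have hmono : Monotone ⇑(ProbabilityTheory.cdf μ) := (ProbabilityTheory.cdf μ).mono
  rw [hmono.continuousAt_iff_leftLim_eq_rightLim]
  rw [(ProbabilityTheory.cdf μ).rightLim_eq]
  have h1 : (ProbabilityTheory.cdf μ).measure {x} = 0 := by
    rw [ProbabilityTheory.measure_cdf]; exact atomless hμ x
  rw [StieltjesFunction.measure_singleton] at h1
  have h2 := hmono.leftLim_le (le_refl x)
  rw [ENNReal.ofReal_eq_zero] at h1
  linarith

lemma cdfR_tendsto_atBot [IsProbabilityMeasure μ] : Tendsto (cdfR μ) atBot (nhds 0) := by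
  rw [cdfR_eq_cdf]; exact ProbabilityTheory.tendsto_cdf_atBot μ

lemma cdfR_tendsto_atTop [IsProbabilityMeasure μ] : Tendsto (cdfR μ) atTop (nhds 1) := by
  rw [cdfR_eq_cdf]; exact ProbabilityTheory.tendsto_cdf_atTop μ

lemma exists_cdfR_eq [IsProbabilityMeasure μ] (hpμ_pos : ∀ x, 0 < pμ x)
    (hpμ_meas : Measurable pμ)
    (hμ : μ = volume.withDensity fun x => ENNReal.ofReal (pμ x))
    {v : ℝ} (hv0 : 0 < v) (hv1 : v < 1) : ∃ x, cdfR μ x = v := by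
  obtain ⟨a, ha⟩ := (cdfR_tendsto_atBot (μ := μ)).eventually (eventually_lt_nhds hv0) |>.exists
  obtain ⟨b, hb⟩ := (cdfR_tendsto_atTop (μ := μ)).eventually (eventually_gt_nhds hv1) |>.exists
  have hab : a ≤ b := by
    by_contra h
    push_neg at h
    exact absurd (cdfR_strictMono hpμ_pos hpμ_meas hμ h) (by linarith)
  obtain ⟨x, _, hx⟩ := intermediate_value_Icc hab ((cdfR_continuous hμ).continuousOn)
    (⟨ha.le, hb.le⟩ : v ∈ Icc (cdfR μ a) (cdfR μ b))
  exact ⟨x, hx⟩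

lemma setOf_le_cdfR [IsProbabilityMeasure μ] (hpμ_pos : ∀ x, 0 < pμ x)
    (hpμ_meas : Measurable pμ)
    (hμ : μ = volume.withDensity fun x => ENNReal.ofReal (pμ x))
    {v x0 : ℝ} (hx0 : cdfR μ x0 = v) : {x | v ≤ cdfR μ x} = Ici x0 := by
  ext y
  simp only [mem_setOf_eq, mem_Ici, ← hx0]
  exact ⟨fun h => ((cdfR_strictMono hpμ_pos hpμ_meas hμ).le_iff_le).mp h,
    fun h => (cdfR_strictMono hpμ_pos hpμ_meas hμ).monotone h⟩

lemma quantile_eq [IsProbabilityMeasure μ] (hpμ_pos : ∀ x, 0 < pμ x)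
    (hpμ_meas : Measurable pμ)
    (hμ : μ = volume.withDensity fun x => ENNReal.ofReal (pμ x))
    {v x0 : ℝ} (hx0 : cdfR μ x0 = v) : quantile μ v = x0 := by
  unfold quantile
  rw [setOf_le_cdfR hpμ_pos hpμ_meas hμ hx0, csInf_Ici]

lemma cdfR_quantile [IsProbabilityMeasure μ] (hpμ_pos : ∀ x, 0 < pμ x)
    (hpμ_meas : Measurable pμ)
    (hμ : μ = volume.withDensity fun x => ENNReal.ofReal (pμ x))
    {v : ℝ} (hv0 : 0 < v) (hv1 : v < 1) : cdfR μ (quantile μ v) = v := by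
  obtain ⟨x0, hx0⟩ := exists_cdfR_eq hpμ_pos hpμ_meas hμ hv0 hv1
  rw [quantile_eq hpμ_pos hpμ_meas hμ hx0, hx0]

lemma quantile_le_iff [IsProbabilityMeasure μ] (hpμ_pos : ∀ x, 0 < pμ x)
    (hpμ_meas : Measurable pμ)
    (hμ : μ = volume.withDensity fun x => ENNReal.ofReal (pμ x))
    {v : ℝ} (hv0 : 0 < v) (hv1 : v < 1) (x : ℝ) :
    quantile μ v ≤ x ↔ v ≤ cdfR μ x := by
  obtain ⟨x0, hx0⟩ := exists_cdfR_eq hpμ_pos hpμ_meas hμ hv0 hv1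
  rw [quantile_eq hpμ_pos hpμ_meas hμ hx0, ← hx0]
  exact ((cdfR_strictMono hpμ_pos hpμ_meas hμ).le_iff_le).symm

lemma le_quantile_iff [IsProbabilityMeasure μ] (hpμ_pos : ∀ x, 0 < pμ x)
    (hpμ_meas : Measurable pμ)
    (hμ : μ = volume.withDensity fun x => ENNReal.ofReal (pμ x))
    {v : ℝ} (hv0 : 0 < v) (hv1 : v < 1) (x : ℝ) :
    x ≤ quantile μ v ↔ cdfR μ x ≤ v := by
  obtain ⟨x0, hx0⟩ := exists_cdfR_eq hpμ_pos hpμ_meas hμ hv0 hv1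
  rw [quantile_eq hpμ_pos hpμ_meas hμ hx0, ← hx0]
  exact ((cdfR_strictMono hpμ_pos hpμ_meas hμ).le_iff_le).symm

lemma tauQ_eq [IsProbabilityMeasure μ] (hpμ_pos : ∀ x, 0 < pμ x)
    (hpμ_meas : Measurable pμ)
    (hμ : μ = volume.withDensity fun x => ENNReal.ofReal (pμ x)) (x : ℝ) :
    tauQ μ x = |2 * cdfR μ x - 1| := by
  have hF0 := cdfR_pos hpμ_pos hpμ_meas hμ x
  have hF1 := cdfR_lt_one hpμ_pos hpμ_meas hμ x
  set τ0 := |2 * cdfR μ x - 1| with hτ0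
  have hτ00 : 0 ≤ τ0 := abs_nonneg _
  have hτ01 : τ0 < 1 := abs_lt.mpr ⟨by linarith, by linarith⟩
  have hset : {t | t ∈ Icc (0:ℝ) 1 ∧ x ∈ DQ μ t} = Icc τ0 1 := by
    ext t
    simp only [mem_setOf_eq, mem_Icc]
    constructor
    · rintro ⟨⟨ht0, ht1⟩, hx⟩
      refine ⟨?_, ht1⟩
      rcases lt_or_ge t 1 with ht | ht
      · rw [DQ, if_pos ht] at hx
        obtain ⟨h1, h2⟩ := hx
        rw [quantile_le_iff hpμ_pos hpμ_meas hμ (by linarith) (by linarith)] at h1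
        rw [le_quantile_iff hpμ_pos hpμ_meas hμ (by linarith) (by linarith)] at h2
        rw [abs_le]
        constructor <;> linarith
      · linarith [hτ01]
    · rintro ⟨hτt, ht1⟩
      refine ⟨⟨by linarith, ht1⟩, ?_⟩
      rcases lt_or_ge t 1 with ht | ht
      · rw [DQ, if_pos ht]
        rw [abs_le] at hτt
        constructor
        · rw [quantile_le_iff hpμ_pos hpμ_meas hμ (by linarith) (by linarith)]
          linarith [hτt.1]
        · rw [le_quantile_iff hpμ_pos hpμ_meas hμ (by linarith) (by linarith)]
          linarith [hτt.2]
      · rw [DQ, if_neg (by linarith)]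
        exact mem_univ x
  rw [tauQ, hset, csInf_Icc hτ01.le]

lemma reflQ_eq [IsProbabilityMeasure μ] (hpμ_pos : ∀ x, 0 < pμ x)
    (hpμ_meas : Measurable pμ)
    (hμ : μ = volume.withDensity fun x => ENNReal.ofReal (pμ x)) (x : ℝ) :
    reflQ μ x = quantile μ (1 - cdfR μ x) := by
  have hFm : cdfR μ (quantile μ (1/2)) = 1/2 :=
    cdfR_quantile hpμ_pos hpμ_meas hμ (by norm_num) (by norm_num)
  have hτ := tauQ_eq hpμ_pos hpμ_meas hμ x
  rw [reflQ]
  rcases lt_trichotomy x (quantile μ (1/2)) with h | h | h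
  · rw [if_pos h]
    have hFx : cdfR μ x < 1/2 := by
      have := cdfR_strictMono hpμ_pos hpμ_meas hμ h
      rwa [hFm] at this
    have : |2 * cdfR μ x - 1| = 1 - 2 * cdfR μ x := by
      rw [abs_of_nonpos (by linarith)]; ring
    rw [hτ, this]
    congr 1
    ring
  · rw [if_neg (by rw [h]; exact lt_irrefl _), if_neg (by rw [h]; exact lt_irrefl _)]
    rw [h, hFm]
    norm_num
  · rw [if_neg (by linarith), if_pos h]
    have hFx : 1/2 < cdfR μ x := by
      have := cdfR_strictMono hpμ_pos hpμ_meas hμ h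
      rwa [hFm] at this
    have : |2 * cdfR μ x - 1| = 2 * cdfR μ x - 1 := by
      rw [abs_of_nonneg (by linarith)]
    rw [hτ, this]
    congr 1
    ring

lemma cdfR_reflQ [IsProbabilityMeasure μ] (hpμ_pos : ∀ x, 0 < pμ x)
    (hpμ_meas : Measurable pμ)
    (hμ : μ = volume.withDensity fun x => ENNReal.ofReal (pμ x)) (x : ℝ) :
    cdfR μ (reflQ μ x) = 1 - cdfR μ x := by
  rw [reflQ_eq hpμ_pos hpμ_meas hμ x]
  exact cdfR_quantile hpμ_pos hpμ_meas hμ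
    (by linarith [cdfR_lt_one hpμ_pos hpμ_meas hμ x])
    (by linarith [cdfR_pos hpμ_pos hpμ_meas hμ x])

lemma reflQ_antitone [IsProbabilityMeasure μ] (hpμ_pos : ∀ x, 0 < pμ x)
    (hpμ_meas : Measurable pμ)
    (hμ : μ = volume.withDensity fun x => ENNReal.ofReal (pμ x)) : Antitone (reflQ μ) := by
  intro a b hab
  rw [reflQ_eq hpμ_pos hpμ_meas hμ a, reflQ_eq hpμ_pos hpμ_meas hμ b]
  have hFa0 := cdfR_pos hpμ_pos hpμ_meas hμ a
  have hFa1 := cdfR_lt_one hpμ_pos hpμ_meas hμ a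
  have hFb0 := cdfR_pos hpμ_pos hpμ_meas hμ b
  have hFb1 := cdfR_lt_one hpμ_pos hpμ_meas hμ b
  rw [quantile_le_iff hpμ_pos hpμ_meas hμ (by linarith) (by linarith),
    cdfR_quantile hpμ_pos hpμ_meas hμ (by linarith) (by linarith)]
  have := (cdfR_strictMono hpμ_pos hpμ_meas hμ).monotone hab
  linarith

lemma reflQ_measurable [IsProbabilityMeasure μ] (hpμ_pos : ∀ x, 0 < pμ x)
    (hpμ_meas : Measurable pμ)
    (hμ : μ = volume.withDensity fun x => ENNReal.ofReal (pμ x)) : Measurable (reflQ μ) :=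
  (reflQ_antitone hpμ_pos hpμ_meas hμ).measurable

lemma ofReal_cdfR [IsProbabilityMeasure μ] (x : ℝ) :
    ENNReal.ofReal (cdfR μ x) = μ (Iic x) := by
  rw [cdfR, ENNReal.ofReal_toReal (measure_ne_top _ _)]

lemma map_reflQ [IsProbabilityMeasure μ] (hpμ_pos : ∀ x, 0 < pμ x)
    (hpμ_meas : Measurable pμ)
    (hμ : μ = volume.withDensity fun x => ENNReal.ofReal (pμ x)) :
    μ.map (reflQ μ) = μ := by
  have hmeas := reflQ_measurable hpμ_pos hpμ_meas hμ
  have : IsProbabilityMeasure (μ.map (reflQ μ)) := Measure.isProbabilityMeasure_map hmeas.aemeasurable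
  refine Measure.ext_of_Iic (μ.map (reflQ μ)) μ fun a => ?_
  rw [Measure.map_apply hmeas measurableSet_Iic]
  have hFa0 := cdfR_pos hpμ_pos hpμ_meas hμ a
  have hFa1 := cdfR_lt_one hpμ_pos hpμ_meas hμ a
  have hpre : reflQ μ ⁻¹' Iic a = Ici (quantile μ (1 - cdfR μ a)) := by
    ext x
    have hFx0 := cdfR_pos hpμ_pos hpμ_meas hμ x
    have hFx1 := cdfR_lt_one hpμ_pos hpμ_meas hμ x
    simp only [mem_preimage, mem_Iic, mem_Ici]
    rw [reflQ_eq hpμ_pos hpμ_meas hμ x,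
      quantile_le_iff hpμ_pos hpμ_meas hμ (by linarith) (by linarith),
      quantile_le_iff hpμ_pos hpμ_meas hμ (by linarith) (by linarith)]
    constructor <;> intro h <;> linarith
  rw [hpre]
  set y := quantile μ (1 - cdfR μ a) with hy
  have hFy : cdfR μ y = 1 - cdfR μ a :=
    cdfR_quantile hpμ_pos hpμ_meas hμ (by linarith) (by linarith)
  have h1 : μ (Ici y) = 1 - μ (Iio y) := by
    rw [← measure_univ (μ := μ), ← Iio_union_Ici (a := y),
      measure_union (Iio_disjoint_Ici le_rfl) measurableSet_Ici]
    rw [ENNReal.add_sub_cancel_left (measure_ne_top _ _)]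
  have h2 : μ (Iio y) = μ (Iic y) := by
    have : Iic y = Iio y ∪ {y} := (Iio_union_right).symm
    rw [this, measure_union (by simp) (measurableSet_singleton y), atomless hμ, add_zero]
  rw [h1, h2, ← ofReal_cdfR, ← ofReal_cdfR, hFy]
  rw [← ENNReal.ofReal_one, ← ENNReal.ofReal_sub _ (by linarith)]
  ring_nf

end Aux

/-- The change-of-variables identity: for every locally absolutely continuous `f`
(with a.e. derivative `f′`, encoded by the fundamental theorem of calculus),
`∫ W(x) (f′(s(x)))² (s′(x))² μ(dx) = ∫ W(y) (f′(y))² μ(dy)`, where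
`s′(x) = −p_μ(x)/p_μ(s(x))`; both sides may be `+∞`, so they are stated as
Lebesgue integrals of nonnegative functions. -/
theorem integral_W_reflected
    (μ : Measure ℝ) [IsProbabilityMeasure μ]
    (pμ : ℝ → ℝ) (hpμ_pos : ∀ x, 0 < pμ x) (hpμ_meas : Measurable pμ)
    (hμ : μ = volume.withDensity fun x => ENNReal.ofReal (pμ x))
    (f f' : ℝ → ℝ)
    (hf'_int : ∀ u v : ℝ, IntervalIntegrable f' volume u v)
    (hFTC : ∀ u v : ℝ, ∫ x in u..v, f' x = f v - f u) :
    ∫⁻ x, ENNReal.ofReal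
        (Wq μ pμ x * (f' (reflQ μ x)) ^ 2 * (-(pμ x) / pμ (reflQ μ x)) ^ 2) ∂μ
      = ∫⁻ y, ENNReal.ofReal (Wq μ pμ y * (f' y) ^ 2) ∂μ := by
  have hmeas := reflQ_measurable hpμ_pos hpμ_meas hμ
  have hmap := map_reflQ hpμ_pos hpμ_meas hμ
  -- pointwise identity
  have key : ∀ x, Wq μ pμ x * (f' (reflQ μ x)) ^ 2 * (-(pμ x) / pμ (reflQ μ x)) ^ 2
      = Wq μ pμ (reflQ μ x) * (f' (reflQ μ x)) ^ 2 := by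
    intro x
    have hFs : cdfR μ (reflQ μ x) = 1 - cdfR μ x := cdfR_reflQ hpμ_pos hpμ_meas hμ x
    have hmin : min (cdfR μ (reflQ μ x)) (1 - cdfR μ (reflQ μ x))
        = min (cdfR μ x) (1 - cdfR μ x) := by
      rw [hFs, sub_sub_cancel, min_comm]
    unfold Wq
    rw [hmin]
    have h1 : pμ x ≠ 0 := (hpμ_pos x).ne'
    have h2 : pμ (reflQ μ x) ≠ 0 := (hpμ_pos (reflQ μ x)).ne'
    field_simp
  -- measurability of the integrand
  have hf'_vol : AEMeasurable f' volume := by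
    have h1 : ∀ n : ℕ, AEStronglyMeasurable f' (volume.restrict (Ioc (-(n:ℝ)) n)) :=
      fun n => (hf'_int (-(n:ℝ)) n).1.aestronglyMeasurable
    have h2 : AEStronglyMeasurable f' (volume.restrict (⋃ n : ℕ, Ioc (-(n:ℝ)) n)) :=
      aestronglyMeasurable_iUnion_iff.mpr h1
    have h3 : (⋃ n : ℕ, Ioc (-(n:ℝ)) n) = univ := by
      ext x
      simp only [mem_iUnion, mem_Ioc, mem_univ, iff_true]
      refine ⟨⌈|x|⌉₊ + 1, ?_, ?_⟩
      · have := Nat.le_ceil |x|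
        have h4 := neg_abs_le x
        push_cast
        linarith
      · have := Nat.le_ceil |x|
        have h4 := le_abs_self x
        push_cast
        linarith
    rw [h3, Measure.restrict_univ] at h2
    exact h2.aemeasurable
  have hac : μ ≪ volume := hμ ▸ withDensity_absolutelyContinuous volume _
  have hf'_μ : AEMeasurable f' μ := hf'_vol.mono_ac hac
  have hW_meas : Measurable (Wq μ pμ) := by
    have hF : Measurable (cdfR μ) := (cdfR_continuous hμ).measurable
    have hm : Measurable fun x => min (cdfR μ x) (1 - cdfR μ x) :=
      hF.min (measurable_const.sub hF)
    exact ((hm.div hpμ_meas).pow_const 2).mul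
      ((measurable_const.div (measurable_const.mul hm)).log)
  have hg : AEMeasurable (fun y => ENNReal.ofReal (Wq μ pμ y * (f' y) ^ 2)) μ := by
    exact ((hW_meas.aemeasurable.mul (hf'_μ.pow_const 2))).ennreal_ofReal
  calc ∫⁻ x, ENNReal.ofReal
        (Wq μ pμ x * (f' (reflQ μ x)) ^ 2 * (-(pμ x) / pμ (reflQ μ x)) ^ 2) ∂μ
      = ∫⁻ x, (fun y => ENNReal.ofReal (Wq μ pμ y * (f' y) ^ 2)) (reflQ μ x) ∂μ := by
        refine lintegral_congr fun x => ?_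
        rw [key x]
    _ = ∫⁻ y, ENNReal.ofReal (Wq μ pμ y * (f' y) ^ 2) ∂(μ.map (reflQ μ)) := by
        have hg' : AEMeasurable (fun y => ENNReal.ofReal (Wq μ pμ y * (f' y) ^ 2))
            (μ.map (reflQ μ)) := by rw [hmap]; exact hg
        rw [lintegral_map' hg' hmeas.aemeasurable]
    _ = ∫⁻ y, ENNReal.ofReal (Wq μ pμ y * (f' y) ^ 2) ∂μ := by rw [hmap]
end
end
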